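/- For any positive integers ℓ < m and any a ≥ 1, the integral of exp(-σ_ℓ(x_1,…,x_m)) over the set {x ∈ [0,∞)^m : x_m ≥ a} is at most (ℓ-1)·((m-1)!)² · a^{-(m-ℓ)/(ℓ-1)}, provided ℓ ≥ 2 and the m-1-variable bound ∫_{[0,∞)^{m-1}} exp(-σ_{ℓ-1}) ≤ ((m-1)!)² holds. -/

import Mathlib

open MeasureTheory Finset ENNReal

def esymm (m ℓ : ℕ) (x : Fin m → ℝ) : ℝ :=
  ∑ I ∈ Finset.powersetCard ℓ (Finset.univ : Finset (Fin m)), ∏ i ∈ I, x i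

lemma esymm_nonneg {m k : ℕ} {x : Fin m → ℝ} (hx : ∀ i, 0 ≤ x i) : 0 ≤ esymm m k x :=
  Finset.sum_nonneg fun _ _ => Finset.prod_nonneg fun i _ => hx i

lemma esymm_zero (n : ℕ) (x : Fin n → ℝ) : esymm n 0 x = 1 := by simp [esymm]

lemma esymm_succ (n k : ℕ) (x : Fin (n+1) → ℝ) :
    esymm (n+1) (k+1) x
      = esymm n (k+1) (x ∘ Fin.castSucc) + x (Fin.last n) * esymm n k (x ∘ Fin.castSucc) := by
  unfold esymm
  have hlast : Fin.last n ∉ (Finset.univ : Finset (Fin n)).map Fin.castSuccEmb := by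
    simp only [Finset.mem_map, Fin.castSuccEmb]
    rintro ⟨i, -, hi⟩
    exact (Fin.castSucc_lt_last i).ne hi
  rw [Fin.univ_castSuccEmb n, Finset.cons_eq_insert, Finset.powersetCard_succ_insert hlast]
  rw [Finset.sum_union]
  · congr 1
    · rw [Finset.powersetCard_map, Finset.sum_map]
      refine Finset.sum_congr rfl fun I _ => ?_
      simp only [RelEmbedding.coe_toEmbedding, Finset.mapEmbedding_apply, Finset.prod_map]
      rfl
    · rw [Finset.powersetCard_map, Finset.sum_image, Finset.sum_map, Finset.mul_sum]
      · refine Finset.sum_congr rfl fun I _ => ?_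
        simp only [RelEmbedding.coe_toEmbedding, Finset.mapEmbedding_apply]
        rw [Finset.prod_insert]
        · rw [Finset.prod_map]; rfl
        · intro hmem
          rcases Finset.mem_map.1 hmem with ⟨i, -, hi⟩
          exact (Fin.castSucc_lt_last i).ne hi
      · intro I hI J hJ hIJ
        have hI' : Fin.last n ∉ I := by
          rcases Finset.mem_map.1 hI with ⟨K, -, rfl⟩
          simp only [RelEmbedding.coe_toEmbedding, Finset.mapEmbedding_apply]
          intro hmem
          rcases Finset.mem_map.1 hmem with ⟨i, -, hi⟩
          exact (Fin.castSucc_lt_last i).ne hi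
        have hJ' : Fin.last n ∉ J := by
          rcases Finset.mem_map.1 hJ with ⟨K, -, rfl⟩
          simp only [RelEmbedding.coe_toEmbedding, Finset.mapEmbedding_apply]
          intro hmem
          rcases Finset.mem_map.1 hmem with ⟨i, -, hi⟩
          exact (Fin.castSucc_lt_last i).ne hi
        have := congrArg (Finset.erase · (Fin.last n)) hIJ
        simpa [Finset.erase_insert, hI', hJ'] using this
  · rw [Finset.disjoint_right]
    intro I hI hI'
    have h1 : Fin.last n ∈ I := by
      rcases Finset.mem_image.1 hI with ⟨J, -, rfl⟩
      exact Finset.mem_insert_self _ _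
    exact hlast ((Finset.mem_powersetCard.1 hI').1 h1)

lemma esymm_smul (m k : ℕ) (c : ℝ) (x : Fin m → ℝ) :
    esymm m k (fun i => c * x i) = c ^ k * esymm m k x := by
  unfold esymm
  rw [Finset.mul_sum]
  refine Finset.sum_congr rfl fun I hI => ?_
  rw [Finset.prod_mul_distrib, Finset.prod_const, (Finset.mem_powersetCard.1 hI).2]

lemma esymm_comp_equiv (m k : ℕ) (x : Fin m → ℝ) (e : Equiv.Perm (Fin m)) :
    esymm m k (x ∘ e) = esymm m k x := by
  unfold esymm
  refine Finset.sum_nbij' (fun I => I.map e.toEmbedding) (fun I => I.map e.symm.toEmbedding)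
    ?_ ?_ ?_ ?_ ?_
  · intro I hI
    simp [Finset.mem_powersetCard, (Finset.mem_powersetCard.1 hI).2]
  · intro I hI
    simp [Finset.mem_powersetCard, (Finset.mem_powersetCard.1 hI).2]
  · intro I _
    ext i
    simp [Finset.mem_map]
  · intro I _
    ext i
    simp [Finset.mem_map]
  · intro I _
    rw [Finset.prod_map]
    rfl

lemma esymm_continuous (m k : ℕ) : Continuous (esymm m k) := by
  unfold esymm
  exact continuous_finset_sum _ fun I _ => continuous_finset_prod _ fun i _ => continuous_apply i

lemma esymm_ge_pivot (n k : ℕ) (x : Fin (n+1) → ℝ) (hx : ∀ j, 0 ≤ x j) (i : Fin (n+1)) :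
    x i * esymm n k (x ∘ i.succAbove) ≤ esymm (n+1) (k+1) x := by
  unfold esymm
  rw [Finset.mul_sum]
  have hnotmem : ∀ I : Finset (Fin n), i ∉ I.map (Fin.succAboveEmb i) := by
    intro I h
    rcases Finset.mem_map.1 h with ⟨j, -, hj⟩
    exact Fin.succAbove_ne i j hj
  have hsub : Finset.image (fun I : Finset (Fin n) => insert i (I.map (Fin.succAboveEmb i)))
      (Finset.powersetCard k Finset.univ) ⊆ Finset.powersetCard (k+1) Finset.univ := by
    intro I hI
    rcases Finset.mem_image.1 hI with ⟨K, hK, rfl⟩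
    rw [Finset.mem_powersetCard]
    refine ⟨Finset.subset_univ _, ?_⟩
    rw [Finset.card_insert_of_notMem (hnotmem K), Finset.card_map,
      (Finset.mem_powersetCard.1 hK).2]
  refine le_trans (le_of_eq ?_) (Finset.sum_le_sum_of_subset_of_nonneg hsub
    (fun I _ _ => Finset.prod_nonneg fun j _ => hx j))
  rw [Finset.sum_image]
  · refine Finset.sum_congr rfl fun I hI => ?_
    rw [Finset.prod_insert (hnotmem I), Finset.prod_map]
    rfl
  · intro I _ J _ hIJ
    have := congrArg (Finset.erase · i) hIJ
    simp only [Finset.erase_insert (hnotmem I), Finset.erase_insert (hnotmem J)] at this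
    exact Finset.map_injective _ this

def Qset (n : ℕ) : Set (Fin n → ℝ) := {x | ∀ i, 0 ≤ x i}

noncomputable def Jint (n k : ℕ) : ℝ≥0∞ := ∫⁻ y in Qset n, ENNReal.ofReal (Real.exp (-esymm n k y))

lemma measurableSet_Qset (n : ℕ) : MeasurableSet (Qset n) := by
  have : Qset n = Set.pi Set.univ (fun _ : Fin n => Set.Ici (0:ℝ)) := by
    ext x; simp only [Qset, Set.mem_setOf_eq, Set.mem_univ_pi, Set.mem_Ici]
  rw [this]
  exact MeasurableSet.univ_pi fun _ => measurableSet_Ici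

lemma transfer {n : ℕ} (i : Fin (n+1)) {b : ℝ} (hb : 0 ≤ b) (F : ℝ → (Fin n → ℝ) → ℝ≥0∞)
    (hF : Measurable fun p : ℝ × (Fin n → ℝ) => F p.1 p.2) :
    ∫⁻ x in {x : Fin (n+1) → ℝ | (∀ j, 0 ≤ x j) ∧ b ≤ x i}, F (x i) (x ∘ i.succAbove)
      = ∫⁻ t in Set.Ici b, ∫⁻ y in Qset n, F t y := by
  set e := MeasurableEquiv.piFinSuccAbove (fun _ : Fin (n+1) => ℝ) i with he
  have hmp : MeasurePreserving e :=
    MeasureTheory.volume_preserving_piFinSuccAbove (fun _ : Fin (n+1) => ℝ) i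
  have heapp : ∀ x : Fin (n+1) → ℝ, e x = (x i, fun j => x (i.succAbove j)) := fun x => rfl
  have hset : {x : Fin (n+1) → ℝ | (∀ j, 0 ≤ x j) ∧ b ≤ x i}
      = e ⁻¹' (Set.Ici b ×ˢ Qset n) := by
    ext x
    simp only [Set.mem_preimage, Set.mem_prod, Set.mem_setOf_eq, Set.mem_Ici, heapp, Qset]
    constructor
    · rintro ⟨h0, hb'⟩
      exact ⟨hb', fun j => h0 _⟩
    · rintro ⟨hb', h0⟩
      refine ⟨fun j => ?_, hb'⟩
      rcases (Fin.forall_iff_succAbove (P := fun j => 0 ≤ x j) i).2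
        ⟨le_trans hb hb', h0⟩ j with h
      exact h
  have key := hmp.setLIntegral_comp_preimage_emb e.measurableEmbedding
    (fun p : ℝ × (Fin n → ℝ) => F p.1 p.2) (Set.Ici b ×ˢ Qset n)
  rw [hset]
  calc ∫⁻ x in e ⁻¹' (Set.Ici b ×ˢ Qset n), F (x i) (x ∘ i.succAbove)
      = ∫⁻ p in Set.Ici b ×ˢ Qset n, F p.1 p.2 := key
    _ = ∫⁻ t in Set.Ici b, ∫⁻ y in Qset n, F t y := by
        rw [Measure.volume_eq_prod, ← Measure.prod_restrict]
        exact lintegral_prod _ hF.aemeasurable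

lemma measurable_g (n k : ℕ) :
    Measurable fun z : Fin n → ℝ => ENNReal.ofReal (Real.exp (-esymm n k z)) :=
  (((esymm_continuous n k).neg).rexp).measurable.ennreal_ofReal

lemma scale (n k : ℕ) (hk : k ≠ 0) {t : ℝ} (ht : 0 < t) :
    ∫⁻ y in Qset n, ENNReal.ofReal (Real.exp (-(t * esymm n k y)))
      = ENNReal.ofReal (t ^ (-((n : ℝ)/(k : ℝ)))) * Jint n k := by
  set c : ℝ := t ^ ((1:ℝ)/(k:ℝ)) with hc
  have hcpos : 0 < c := Real.rpow_pos_of_pos ht _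
  have hck : c ^ k = t := by
    rw [hc, ← Real.rpow_natCast (t ^ ((1:ℝ)/(k:ℝ))) k, ← Real.rpow_mul ht.le]
    rw [show (1:ℝ)/(k:ℝ) * (k:ℕ) = 1 by field_simp, Real.rpow_one]
  have hpt : ∀ y : Fin n → ℝ, t * esymm n k y = esymm n k (c • y) := by
    intro y
    rw [show (c • y) = fun i => c * y i from rfl, esymm_smul, hck]
  have hpre : (fun y : Fin n → ℝ => c • y) ⁻¹' Qset n = Qset n := by
    ext y
    simp only [Set.mem_preimage, Qset, Set.mem_setOf_eq, Pi.smul_apply, smul_eq_mul]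
    exact ⟨fun h i => nonneg_of_mul_nonneg_right (h i) hcpos,
      fun h i => mul_nonneg hcpos.le (h i)⟩
  have hmap : ∫⁻ z in Qset n, ENNReal.ofReal (Real.exp (-esymm n k z))
        ∂(Measure.map (c • ·) volume)
      = ∫⁻ y in (c • ·) ⁻¹' Qset n, ENNReal.ofReal (Real.exp (-esymm n k (c • y))) :=
    setLIntegral_map (measurableSet_Qset n) (measurable_g n k) (measurable_const_smul c)
  have hfin : Module.finrank ℝ (Fin n → ℝ) = n := by
    simp [Module.finrank_fintype_fun_eq_card]
  have hconst : ENNReal.ofReal |((c ^ Module.finrank ℝ (Fin n → ℝ)) : ℝ)⁻¹|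
      = ENNReal.ofReal (t ^ (-((n : ℝ)/(k : ℝ)))) := by
    rw [hfin]
    congr 1
    rw [abs_of_nonneg (inv_nonneg.2 (pow_nonneg hcpos.le n))]
    rw [hc, ← Real.rpow_natCast (t ^ ((1:ℝ)/(k:ℝ))) n, ← Real.rpow_mul ht.le,
      ← Real.rpow_neg ht.le]
    congr 1
    ring
  calc ∫⁻ y in Qset n, ENNReal.ofReal (Real.exp (-(t * esymm n k y)))
      = ∫⁻ y in (c • ·) ⁻¹' Qset n, ENNReal.ofReal (Real.exp (-esymm n k (c • y))) := by
        rw [hpre]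
        exact lintegral_congr fun y => by rw [hpt y]
    _ = ∫⁻ z in Qset n, ENNReal.ofReal (Real.exp (-esymm n k z))
        ∂(Measure.map (c • ·) volume) := hmap.symm
    _ = ENNReal.ofReal (t ^ (-((n : ℝ)/(k : ℝ)))) * Jint n k := by
        rw [Measure.map_addHaar_smul volume hcpos.ne', Measure.restrict_smul, lintegral_smul_measure,
          hconst]
        rfl

lemma oneD {p a : ℝ} (hp : p < -1) (ha : 0 < a) :
    ∫⁻ t in Set.Ici a, ENNReal.ofReal (t ^ p) = ENNReal.ofReal (a ^ (p+1) / (-(p+1))) := by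
  rw [show (volume : Measure ℝ).restrict (Set.Ici a) = volume.restrict (Set.Ioi a) from
    (Measure.restrict_congr_set Ioi_ae_eq_Ici).symm]
  rw [← ofReal_integral_eq_lintegral_ofReal (integrableOn_Ioi_rpow_of_lt hp ha) ?_]
  · rw [integral_Ioi_rpow_of_lt hp ha]
    congr 1
    rw [div_neg, neg_div]
  · filter_upwards [ae_restrict_mem measurableSet_Ioi] with t ht
    exact Real.rpow_nonneg (le_of_lt (ha.trans ht)) p

set_option maxHeartbeats 1000000 in
lemma tail_bound {n k : ℕ} (hk : 1 ≤ k) (hkn : k < n) (i : Fin (n+1)) {a : ℝ} (ha : 1 ≤ a) :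
    ∫⁻ x in {x : Fin (n+1) → ℝ | (∀ j, 0 ≤ x j) ∧ a ≤ x i},
        ENNReal.ofReal (Real.exp (-esymm (n+1) (k+1) x))
      ≤ ENNReal.ofReal ((k:ℝ)/((n:ℝ)-(k:ℝ)) * a ^ (-(((n:ℝ)-(k:ℝ))/(k:ℝ)))) * Jint n k := by
  have ha0 : (0:ℝ) ≤ a := le_trans zero_le_one ha
  have hk0 : (0:ℝ) < (k:ℝ) := by exact_mod_cast hk
  have hnk : (0:ℝ) < (n:ℝ) - (k:ℝ) := by
    have : (k:ℝ) < (n:ℝ) := by exact_mod_cast hkn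
    linarith
  set q : ℝ := -((n:ℝ)/(k:ℝ)) with hq
  have hq1 : q < -1 := by
    rw [hq, neg_lt_neg_iff, lt_div_iff₀ hk0]
    linarith
  have hFmeas : Measurable fun p : ℝ × (Fin n → ℝ) =>
      ENNReal.ofReal (Real.exp (-(p.1 * esymm n k p.2))) := by
    apply Measurable.ennreal_ofReal
    exact ((continuous_fst.mul ((esymm_continuous n k).comp continuous_snd)).neg.rexp).measurable
  have step1 : ∫⁻ x in {x : Fin (n+1) → ℝ | (∀ j, 0 ≤ x j) ∧ a ≤ x i},
        ENNReal.ofReal (Real.exp (-esymm (n+1) (k+1) x))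
      ≤ ∫⁻ x in {x : Fin (n+1) → ℝ | (∀ j, 0 ≤ x j) ∧ a ≤ x i},
        ENNReal.ofReal (Real.exp (-(x i * esymm n k (x ∘ i.succAbove)))) := by
    have hg : Measurable fun x : Fin (n+1) → ℝ =>
        ENNReal.ofReal (Real.exp (-(x i * esymm n k (x ∘ i.succAbove)))) :=
      Measurable.ennreal_ofReal (Continuous.measurable (Real.continuous_exp.comp
        (Continuous.neg ((continuous_apply i).mul ((esymm_continuous n k).comp
          (continuous_pi fun j => continuous_apply (i.succAbove j)))))))
    refine setLIntegral_mono hg ?_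
    rintro x ⟨h0, -⟩
    exact ENNReal.ofReal_le_ofReal (Real.exp_le_exp.2 (neg_le_neg (esymm_ge_pivot n k x h0 i)))
  have step2 : ∫⁻ x in {x : Fin (n+1) → ℝ | (∀ j, 0 ≤ x j) ∧ a ≤ x i},
        ENNReal.ofReal (Real.exp (-(x i * esymm n k (x ∘ i.succAbove))))
      = ∫⁻ t in Set.Ici a, ∫⁻ y in Qset n, ENNReal.ofReal (Real.exp (-(t * esymm n k y))) :=
    transfer i ha0 (fun t y => ENNReal.ofReal (Real.exp (-(t * esymm n k y)))) hFmeas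
  set u : ℝ → ℝ≥0∞ := fun t => ENNReal.ofReal (Real.exp (Real.log t * q)) with hu
  have humeas : Measurable u := ((Real.measurable_log.mul_const q).exp).ennreal_ofReal
  have step3 : ∫⁻ t in Set.Ici a, ∫⁻ y in Qset n, ENNReal.ofReal (Real.exp (-(t * esymm n k y)))
      = ∫⁻ t in Set.Ici a, u t * Jint n k := by
    refine setLIntegral_congr_fun measurableSet_Ici (fun t ht => ?_)
    have htpos : 0 < t := lt_of_lt_of_le (lt_of_lt_of_le zero_lt_one ha) ht
    rw [scale n k (by omega) htpos]
    congr 1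
    show ENNReal.ofReal (t ^ q) = ENNReal.ofReal (Real.exp (Real.log t * q))
    rw [Real.rpow_def_of_pos htpos]
  have step4 : ∫⁻ t in Set.Ici a, u t * Jint n k
      = (∫⁻ t in Set.Ici a, u t) * Jint n k := lintegral_mul_const _ humeas
  have step5 : ∫⁻ t in Set.Ici a, u t = ENNReal.ofReal (a ^ (q+1) / (-(q+1))) := by
    rw [← oneD hq1 (lt_of_lt_of_le zero_lt_one ha)]
    refine setLIntegral_congr_fun measurableSet_Ici (fun t ht => ?_)
    have htpos : 0 < t := lt_of_lt_of_le (lt_of_lt_of_le zero_lt_one ha) ht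
    show ENNReal.ofReal (Real.exp (Real.log t * q)) = ENNReal.ofReal (t ^ q)
    rw [Real.rpow_def_of_pos htpos]
  have step6 : a ^ (q+1) / (-(q+1))
      = (k:ℝ)/((n:ℝ)-(k:ℝ)) * a ^ (-(((n:ℝ)-(k:ℝ))/(k:ℝ))) := by
    have e1 : q + 1 = -(((n:ℝ)-(k:ℝ))/(k:ℝ)) := by
      rw [hq]
      field_simp
      ring
    rw [e1, neg_neg, div_div_eq_mul_div]
    ring
  refine le_trans step1 (le_of_eq ?_)
  rw [step2, step3, step4, step5, step6]

lemma Jint_le_one_of_esymm_eq_zero : Jint 0 1 < ⊤ := by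
  have hle : Jint 0 1 ≤ volume (Qset 0) := by
    rw [Jint]
    calc ∫⁻ y in Qset 0, ENNReal.ofReal (Real.exp (-esymm 0 1 y))
        ≤ ∫⁻ _ in Qset 0, 1 := lintegral_mono fun y => by
          rw [show (1:ℝ≥0∞) = ENNReal.ofReal 1 by simp]
          exact ENNReal.ofReal_le_ofReal (Real.exp_le_one_iff.2
            (neg_nonpos.2 (esymm_nonneg (fun i => i.elim0))))
      _ = volume (Qset 0) := setLIntegral_one _
  refine lt_of_le_of_lt hle ?_
  refine lt_of_le_of_lt (measure_mono (Set.subset_univ _)) ?_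
  rw [volume_pi, Measure.pi_univ]
  simp

lemma Jint_one_lt_top (n : ℕ) : Jint n 1 < ⊤ := by
  induction n with
  | zero => exact Jint_le_one_of_esymm_eq_zero
  | succ n ih =>
    have hQ : Qset (n+1) = {x : Fin (n+1) → ℝ | (∀ j, 0 ≤ x j) ∧ (0:ℝ) ≤ x (Fin.last n)} := by
      ext x
      exact ⟨fun h => ⟨h, h _⟩, fun h => h.1⟩
    have hdecomp : ∀ x : Fin (n+1) → ℝ,
        esymm (n+1) 1 x = esymm n 1 (x ∘ (Fin.last n).succAbove) + x (Fin.last n) := by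
      intro x
      have h := esymm_succ n 0 x
      rw [esymm_zero, mul_one] at h
      rw [Fin.succAbove_last]
      simpa using h
    have hFmeas : Measurable fun p : ℝ × (Fin n → ℝ) =>
        ENNReal.ofReal (Real.exp (-(esymm n 1 p.2 + p.1))) := by
      apply Measurable.ennreal_ofReal
      exact ((((esymm_continuous n 1).comp continuous_snd).add continuous_fst).neg.rexp).measurable
    have h1 : Jint (n+1) 1
        = ∫⁻ t in Set.Ici (0:ℝ), ∫⁻ y in Qset n,
            ENNReal.ofReal (Real.exp (-(esymm n 1 y + t))) := by
      rw [Jint, hQ]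
      rw [show (fun x : Fin (n+1) → ℝ => ENNReal.ofReal (Real.exp (-esymm (n+1) 1 x)))
        = fun x => ENNReal.ofReal (Real.exp (-(esymm n 1 (x ∘ (Fin.last n).succAbove)
            + x (Fin.last n)))) from funext fun x => by rw [hdecomp x]]
      exact transfer (Fin.last n) le_rfl
        (fun t y => ENNReal.ofReal (Real.exp (-(esymm n 1 y + t)))) hFmeas
    have h2 : ∀ t : ℝ, ∫⁻ y in Qset n, ENNReal.ofReal (Real.exp (-(esymm n 1 y + t)))
        = Jint n 1 * ENNReal.ofReal (Real.exp (-t)) := by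
      intro t
      rw [Jint, ← lintegral_mul_const' (ENNReal.ofReal (Real.exp (-t))) _ ENNReal.ofReal_ne_top]
      refine lintegral_congr fun y => ?_
      rw [← ENNReal.ofReal_mul (Real.exp_nonneg _)]
      · congr 1
        rw [← Real.exp_add]
        congr 1
        ring
    have h3 : Jint (n+1) 1 = Jint n 1 * ∫⁻ t in Set.Ici (0:ℝ), ENNReal.ofReal (Real.exp (-t)) := by
      rw [h1]
      rw [show (fun t : ℝ => ∫⁻ y in Qset n, ENNReal.ofReal (Real.exp (-(esymm n 1 y + t))))
        = fun t => Jint n 1 * ENNReal.ofReal (Real.exp (-t)) from funext h2]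
      exact lintegral_const_mul' _ _ ih.ne
    rw [h3]
    refine ENNReal.mul_lt_top ih ?_
    have hint : IntegrableOn (fun t : ℝ => Real.exp (-t)) (Set.Ioi (0:ℝ)) := by
      simpa using exp_neg_integrableOn_Ioi 0 one_pos
    rw [show (volume : Measure ℝ).restrict (Set.Ici (0:ℝ)) = volume.restrict (Set.Ioi 0) from
      (Measure.restrict_congr_set Ioi_ae_eq_Ici).symm]
    rw [← ofReal_integral_eq_lintegral_ofReal hint
      (ae_of_all _ fun t => (Real.exp_nonneg _))]
    exact ENNReal.ofReal_lt_top

lemma Jint_lt_top : ∀ {k n : ℕ}, 1 ≤ k → k < n → Jint n k < ⊤ := by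
  intro k
  induction k with
  | zero => intro n h; omega
  | succ j ihj =>
    intro n hk hkn
    rcases Nat.eq_zero_or_pos j with hj0 | hj1
    · subst hj0; exact Jint_one_lt_top n
    obtain ⟨n', rfl⟩ : ∃ n', n = n' + 1 := ⟨n-1, by omega⟩
    have hjn' : j < n' := by omega
    have hboxmeas : MeasurableSet (Set.pi Set.univ (fun _ : Fin (n'+1) => Set.Icc (0:ℝ) 1)) :=
      MeasurableSet.univ_pi fun _ => measurableSet_Icc
    have hsub : Qset (n'+1) ⊆ (Set.pi Set.univ (fun _ : Fin (n'+1) => Set.Icc (0:ℝ) 1))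
        ∪ ⋃ i, {x : Fin (n'+1) → ℝ | (∀ l, 0 ≤ x l) ∧ (1:ℝ) ≤ x i} := by
      intro x hx
      by_cases hall : ∀ i, x i ≤ 1
      · left
        intro i _
        exact ⟨hx i, hall i⟩
      · push_neg at hall
        obtain ⟨i, hi⟩ := hall
        right
        exact Set.mem_iUnion.2 ⟨i, hx, hi.le⟩
    have hbox : ∫⁻ x in Set.pi Set.univ (fun _ : Fin (n'+1) => Set.Icc (0:ℝ) 1),
        ENNReal.ofReal (Real.exp (-esymm (n'+1) (j+1) x)) ≤ 1 := by
      calc ∫⁻ x in Set.pi Set.univ (fun _ : Fin (n'+1) => Set.Icc (0:ℝ) 1),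
            ENNReal.ofReal (Real.exp (-esymm (n'+1) (j+1) x))
          ≤ ∫⁻ _ in Set.pi Set.univ (fun _ : Fin (n'+1) => Set.Icc (0:ℝ) 1), 1 := by
            refine setLIntegral_mono' hboxmeas fun x hx => ?_
            rw [show (1:ℝ≥0∞) = ENNReal.ofReal 1 by simp]
            exact ENNReal.ofReal_le_ofReal (Real.exp_le_one_iff.2
              (neg_nonpos.2 (esymm_nonneg fun i => (hx i (Set.mem_univ i)).1)))
        _ = volume (Set.pi Set.univ (fun _ : Fin (n'+1) => Set.Icc (0:ℝ) 1)) :=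
            setLIntegral_one _
        _ = 1 := by
            rw [volume_pi_pi]
            simp [Real.volume_Icc]
    have htail : ∀ i : Fin (n'+1),
        ∫⁻ x in {x : Fin (n'+1) → ℝ | (∀ l, 0 ≤ x l) ∧ (1:ℝ) ≤ x i},
          ENNReal.ofReal (Real.exp (-esymm (n'+1) (j+1) x)) < ⊤ := fun i =>
      lt_of_le_of_lt (tail_bound hj1 hjn' i le_rfl)
        (ENNReal.mul_lt_top ENNReal.ofReal_lt_top (ihj hj1 hjn'))
    calc Jint (n'+1) (j+1)
        ≤ ∫⁻ x in (Set.pi Set.univ (fun _ : Fin (n'+1) => Set.Icc (0:ℝ) 1))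
            ∪ ⋃ i, {x : Fin (n'+1) → ℝ | (∀ l, 0 ≤ x l) ∧ (1:ℝ) ≤ x i},
            ENNReal.ofReal (Real.exp (-esymm (n'+1) (j+1) x)) :=
          lintegral_mono' (Measure.restrict_mono hsub le_rfl) le_rfl
      _ ≤ (∫⁻ x in Set.pi Set.univ (fun _ : Fin (n'+1) => Set.Icc (0:ℝ) 1),
            ENNReal.ofReal (Real.exp (-esymm (n'+1) (j+1) x)))
          + ∫⁻ x in ⋃ i, {x : Fin (n'+1) → ℝ | (∀ l, 0 ≤ x l) ∧ (1:ℝ) ≤ x i},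
            ENNReal.ofReal (Real.exp (-esymm (n'+1) (j+1) x)) := lintegral_union_le _ _ _
      _ ≤ 1 + ∑' i : Fin (n'+1), ∫⁻ x in {x : Fin (n'+1) → ℝ | (∀ l, 0 ≤ x l) ∧ (1:ℝ) ≤ x i},
            ENNReal.ofReal (Real.exp (-esymm (n'+1) (j+1) x)) :=
          add_le_add hbox (lintegral_iUnion_le _ _)
      _ < ⊤ := by
          rw [tsum_fintype]
          exact ENNReal.add_lt_top.2 ⟨ENNReal.one_lt_top,
            ENNReal.sum_lt_top.2 fun i _ => htail i⟩

theorem integral_tail_le (ℓ m : ℕ) (hℓ : 2 ≤ ℓ) (hℓm : ℓ < m) (a : ℝ) (ha : 1 ≤ a)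
    (hind : (∫ x in {x : Fin (m-1) → ℝ | ∀ i, 0 ≤ x i}, Real.exp (-esymm (m-1) (ℓ-1) x))
        ≤ ((Nat.factorial (m-1) : ℝ))^2) :
    (∫ x in {x : Fin m → ℝ | (∀ i, 0 ≤ x i) ∧ a ≤ x ⟨m-1, by omega⟩},
        Real.exp (-esymm m ℓ x))
      ≤ ((ℓ : ℝ) - 1) * ((Nat.factorial (m-1) : ℝ))^2
          * a ^ (-(((m : ℝ) - ℓ) / ((ℓ : ℝ) - 1))) := by
  obtain ⟨n, rfl⟩ : ∃ n, m = n + 1 := ⟨m-1, by omega⟩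
  obtain ⟨k, rfl⟩ : ∃ k, ℓ = k + 1 := ⟨ℓ-1, by omega⟩
  have hk1 : 1 ≤ k := by omega
  have hkn : k < n := by omega
  have ha0 : (0:ℝ) < a := lt_of_lt_of_le zero_lt_one ha
  simp only [Nat.add_sub_cancel] at hind
  have hnkpos : (0:ℝ) < (n:ℝ) - (k:ℝ) := by
    have : (k:ℝ) < (n:ℝ) := by exact_mod_cast hkn
    linarith
  -- bound Jint by hind
  have hJfin : Jint n k < ⊤ := Jint_lt_top hk1 hkn
  have hJle : Jint n k ≤ ENNReal.ofReal ((Nat.factorial n : ℝ)^2) := by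
    have heq : (Jint n k).toReal = ∫ x in Qset n, Real.exp (-esymm n k x) := by
      rw [integral_eq_lintegral_of_nonneg_ae (f := fun x => Real.exp (-esymm n k x))
        (ae_of_all _ fun x => (Real.exp_pos _).le)
        ((esymm_continuous n k).neg.rexp.aestronglyMeasurable)]
      rfl
    have hJeq : Jint n k = ENNReal.ofReal (∫ x in Qset n, Real.exp (-esymm n k x)) := by
      rw [← heq, ENNReal.ofReal_toReal hJfin.ne]
    rw [hJeq]
    exact ENNReal.ofReal_le_ofReal hind
  have key : (∫ x in {x : Fin (n+1) → ℝ | (∀ i, 0 ≤ x i) ∧ a ≤ x (Fin.last n)},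
        Real.exp (-esymm (n+1) (k+1) x))
      ≤ (k:ℝ) * ((Nat.factorial n : ℝ))^2 * a ^ (-(((n:ℝ)-(k:ℝ))/(k:ℝ))) := by
    rw [integral_eq_lintegral_of_nonneg_ae (f := fun x => Real.exp (-esymm (n+1) (k+1) x))
      (ae_of_all _ fun x => (Real.exp_pos _).le)
      ((esymm_continuous (n+1) (k+1)).neg.rexp.aestronglyMeasurable)]
    refine ENNReal.toReal_le_of_le_ofReal
      (mul_nonneg (mul_nonneg (Nat.cast_nonneg k) (sq_nonneg _))
        (Real.rpow_nonneg ha0.le _)) ?_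
    calc ∫⁻ x in {x : Fin (n+1) → ℝ | (∀ i, 0 ≤ x i) ∧ a ≤ x (Fin.last n)},
          ENNReal.ofReal (Real.exp (-esymm (n+1) (k+1) x))
        ≤ ENNReal.ofReal ((k:ℝ)/((n:ℝ)-(k:ℝ)) * a ^ (-(((n:ℝ)-(k:ℝ))/(k:ℝ)))) * Jint n k :=
          tail_bound hk1 hkn (Fin.last n) ha
      _ ≤ ENNReal.ofReal ((k:ℝ)/((n:ℝ)-(k:ℝ)) * a ^ (-(((n:ℝ)-(k:ℝ))/(k:ℝ))))
            * ENNReal.ofReal ((Nat.factorial n : ℝ)^2) := mul_le_mul_right hJle _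
      _ = ENNReal.ofReal (((k:ℝ)/((n:ℝ)-(k:ℝ)) * a ^ (-(((n:ℝ)-(k:ℝ))/(k:ℝ))))
            * (Nat.factorial n : ℝ)^2) :=
          (ENNReal.ofReal_mul (mul_nonneg (div_nonneg (Nat.cast_nonneg k) hnkpos.le)
            (Real.rpow_nonneg ha0.le _))).symm
      _ ≤ ENNReal.ofReal ((k:ℝ) * ((Nat.factorial n : ℝ))^2 * a ^ (-(((n:ℝ)-(k:ℝ))/(k:ℝ)))) := by
          refine ENNReal.ofReal_le_ofReal ?_
          have h1 : (k:ℝ)/((n:ℝ)-(k:ℝ)) ≤ (k:ℝ) := by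
            refine div_le_self (Nat.cast_nonneg k) ?_
            have : (k:ℝ) + 1 ≤ (n:ℝ) := by exact_mod_cast hkn
            linarith
          have h2 : (k:ℝ)/((n:ℝ)-(k:ℝ)) * a ^ (-(((n:ℝ)-(k:ℝ))/(k:ℝ)))
              * (Nat.factorial n : ℝ)^2
              ≤ (k:ℝ) * a ^ (-(((n:ℝ)-(k:ℝ))/(k:ℝ))) * (Nat.factorial n : ℝ)^2 := by
            gcongr
          refine le_trans h2 (le_of_eq ?_)
          ring
  show (∫ x in {x : Fin (n+1) → ℝ | (∀ i, 0 ≤ x i) ∧ a ≤ x (Fin.last n)},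
        Real.exp (-esymm (n+1) (k+1) x))
      ≤ (((k+1 : ℕ) : ℝ) - 1) * ((Nat.factorial n : ℝ))^2
          * a ^ (-((((n+1:ℕ) : ℝ) - ((k+1:ℕ) : ℝ)) / (((k+1:ℕ) : ℝ) - 1)))
  have hc1 : (((k+1 : ℕ) : ℝ) - 1) = (k:ℝ) := by push_cast; ring
  have hc2 : (-((((n+1:ℕ) : ℝ) - ((k+1:ℕ) : ℝ)) / (((k+1:ℕ) : ℝ) - 1)))
      = (-(((n:ℝ)-(k:ℝ))/(k:ℝ))) := by push_cast; ring
  rw [hc2, hc1]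
  exact key
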